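/- In the universal cover of a closed Riemannian manifold with infinite fundamental group (in particular, if the universal cover is non-compact), there exists a geodesic line σ : ℝ → Ñ, i.e., a curve with d(σ(t₁), σ(t₂)) = |t₂ − t₁| for all t₁, t₂ ∈ ℝ. -/

import Mathlib

open Topology Filter


/-- Let `X` be a proper geodesic metric space (e.g. the universal cover
of a closed Riemannian manifold with its pullback metric) which is non-compact, on which
a group `G` acts by isometries cocompactly (as the deck group does).  Then there exists a
geodesic line `σ : ℝ → X`, i.e. `dist (σ t₁) (σ t₂) = |t₂ - t₁|` for all `t₁ t₂ : ℝ`. -/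
theorem exists_geodesic_line_of_cocompact_noncompact
    (X : Type) [MetricSpace X] [ProperSpace X] [Nonempty X]
    (G : Type) [Group G] [MulAction G X]
    (hiso : ∀ g : G, Isometry (fun x : X => g • x))
    (hcocompact : ∃ K : Set X, IsCompact K ∧ ∀ x : X, ∃ g : G, g • x ∈ K)
    (hgeodesic : ∀ x y : X, ∃ γ : ℝ → X, γ 0 = x ∧ γ (dist x y) = y ∧
      ∀ s ∈ Set.Icc (0:ℝ) (dist x y), ∀ t ∈ Set.Icc (0:ℝ) (dist x y),
        dist (γ s) (γ t) = |t - s|)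
    (hnoncompact : ¬ CompactSpace X) :
    ∃ σ : ℝ → X, ∀ t₁ t₂ : ℝ, dist (σ t₁) (σ t₂) = |t₂ - t₁| := by
  obtain ⟨K, hK, hKcover⟩ := hcocompact
  obtain ⟨x₀⟩ := ‹Nonempty X›
  -- K is nonempty
  obtain ⟨g₀, hg₀⟩ := hKcover x₀
  have hKne : K.Nonempty := ⟨g₀ • x₀, hg₀⟩
  obtain ⟨k₀, hk₀⟩ := hKne
  -- K bounded: K ⊆ closedBall k₀ R
  obtain ⟨R, hR⟩ := (Metric.isBounded_iff_subset_closedBall k₀).1 hK.isBounded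
  -- Unboundedness: for every r there is y with dist x₀ y > r
  have hunb : ∀ r : ℝ, ∃ y : X, r < dist x₀ y := by
    intro r
    by_contra h
    push_neg at h
    apply hnoncompact
    rw [← isCompact_univ_iff]
    exact (isCompact_closedBall x₀ r).of_isClosed_subset isClosed_univ
      (fun y _ => Metric.mem_closedBall'.2 (h y))
  -- For every n, a segment of an "almost line": isometric on [-n, n], with δ 0 ∈ K
  have key : ∀ n : ℕ, ∃ δ : ℝ → X, δ 0 ∈ K ∧ (∀ t : ℝ, dist (δ t) (δ 0) ≤ |t|) ∧
      ∀ s ∈ Set.Icc (-(n:ℝ)) n, ∀ t ∈ Set.Icc (-(n:ℝ)) n, dist (δ s) (δ t) = |t - s| := by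
    intro n
    obtain ⟨y, hy⟩ := hunb (2 * n)
    set d : ℝ := dist x₀ y with hd
    have hdn : (n : ℝ) ≤ d / 2 := by
      have := hy.le
      linarith
    obtain ⟨γ, hγ0, hγd, hγ⟩ := hgeodesic x₀ y
    obtain ⟨g, hg⟩ := hKcover (γ (d / 2))
    -- clamp t to [-n, n]
    set c : ℝ → ℝ := fun t => max (-(n:ℝ)) (min (n:ℝ) t) with hc
    have hcmem : ∀ t, c t ∈ Set.Icc (-(n:ℝ)) (n:ℝ) := by
      intro t
      constructor
      · exact le_max_left _ _
      · exact max_le (by simpa using (Nat.cast_nonneg n : (0:ℝ) ≤ n)) (min_le_left _ _)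
    have hcid : ∀ t ∈ Set.Icc (-(n:ℝ)) (n:ℝ), c t = t := by
      intro t ht
      rw [hc]
      simp only [min_eq_right ht.2, max_eq_right ht.1]
    have hdom : ∀ t, d / 2 + c t ∈ Set.Icc (0:ℝ) d := by
      intro t
      have h1 := (hcmem t).1
      have h2 := (hcmem t).2
      constructor <;> [linarith; linarith]
    refine ⟨fun t => g • γ (d / 2 + c t), ?_, ?_, ?_⟩
    · have hc0 : c 0 = 0 := hcid 0 (by constructor <;> simp)
      simpa [hc0] using hg
    · intro t
      have hc0 : c 0 = 0 := hcid 0 (by constructor <;> simp)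
      have := (hiso g).dist_eq (γ (d / 2 + c t)) (γ (d / 2 + c 0))
      rw [this, hγ _ (hdom t) _ (hdom 0), hc0]
      have : d / 2 + 0 - (d / 2 + c t) = -(c t) := by ring
      rw [this, abs_neg]
      -- |c t| ≤ |t|
      have hn0 : (0:ℝ) ≤ (n:ℝ) := Nat.cast_nonneg n
      rcases le_total t 0 with h | h
      · have h2 : c t ≤ 0 := by
          have : min (n:ℝ) t ≤ 0 := le_trans (min_le_right _ _) h
          exact max_le (by linarith) this
        have h3 : t ≤ c t := by
          have : min (n:ℝ) t = t := min_eq_right (le_trans h hn0)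
          rw [hc]; simp only [this]; exact le_max_right _ _
        rw [abs_of_nonpos h2, abs_of_nonpos h]
        linarith
      · have h2 : 0 ≤ c t := le_trans (le_min hn0 h) (le_max_right _ _)
        have h3 : c t ≤ t := by
          rcases le_total (n:ℝ) t with h' | h'
          · calc c t ≤ n := (hcmem t).2
              _ ≤ t := h'
          · have : min (n:ℝ) t = t := min_eq_right h'
            rw [hc]; simp only [this]; exact max_le (by linarith) le_rfl
        rw [abs_of_nonneg h2, abs_of_nonneg h]
        exact h3
    · intro s hs t ht
      have := (hiso g).dist_eq (γ (d / 2 + c s)) (γ (d / 2 + c t))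
      rw [this, hγ _ (hdom s) _ (hdom t), hcid s hs, hcid t ht]
      congr 1; ring
  choose δ hδK hδ0 hδiso using key
  -- ultrafilter along atTop
  haveI : (Filter.atTop : Filter ℕ).NeBot := Filter.atTop_neBot
  set U : Ultrafilter ℕ := Ultrafilter.of Filter.atTop with hUdef
  have hU : (U : Filter ℕ) ≤ Filter.atTop := Ultrafilter.of_le _
  -- for each t, the points δ n t lie in a fixed compact set
  have hlim : ∀ t : ℝ, ∃ a : X, Filter.Tendsto (fun n => δ n t) (U : Filter ℕ) (𝓝 a) := by
    intro t
    have hmem : ∀ n, δ n t ∈ Metric.closedBall k₀ (|t| + R) := by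
      intro n
      rw [Metric.mem_closedBall]
      calc dist (δ n t) k₀ ≤ dist (δ n t) (δ n 0) + dist (δ n 0) k₀ := dist_triangle _ _ _
        _ ≤ |t| + R := by
            have h1 := hδ0 n t
            have h2 : dist (δ n 0) k₀ ≤ R := Metric.mem_closedBall.1 (hR (hδK n))
            linarith
    have hcomp : IsCompact (Metric.closedBall k₀ (|t| + R)) := isCompact_closedBall _ _
    have hle : (Ultrafilter.map (fun n => δ n t) U : Filter X) ≤
        Filter.principal (Metric.closedBall k₀ (|t| + R)) := by
      rw [Filter.le_principal_iff]
      exact Filter.mem_map.2 (Filter.univ_mem' hmem)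
    obtain ⟨a, _, ha⟩ := hcomp.ultrafilter_le_nhds _ hle
    exact ⟨a, ha⟩
  choose σ hσ using hlim
  refine ⟨σ, fun t₁ t₂ => ?_⟩
  have h1 : Filter.Tendsto (fun n => dist (δ n t₁) (δ n t₂)) (U : Filter ℕ)
      (𝓝 (dist (σ t₁) (σ t₂))) := (hσ t₁).dist (hσ t₂)
  have h2 : ∀ᶠ n in (U : Filter ℕ), dist (δ n t₁) (δ n t₂) = |t₂ - t₁| := by
    apply hU
    filter_upwards [Filter.eventually_ge_atTop ⌈max |t₁| |t₂|⌉₊] with n hn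
    have hmax : max |t₁| |t₂| ≤ (n : ℝ) := le_trans (Nat.le_ceil _) (Nat.cast_le.2 hn)
    have ht₁ : t₁ ∈ Set.Icc (-(n:ℝ)) n := by
      rw [Set.mem_Icc, ← abs_le]
      exact le_trans (le_max_left _ _) hmax
    have ht₂ : t₂ ∈ Set.Icc (-(n:ℝ)) n := by
      rw [Set.mem_Icc, ← abs_le]
      exact le_trans (le_max_right _ _) hmax
    exact hδiso n t₁ ht₁ t₂ ht₂
  have h3 : Filter.Tendsto (fun n => dist (δ n t₁) (δ n t₂)) (U : Filter ℕ)
      (𝓝 (|t₂ - t₁|)) := by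
    refine Filter.Tendsto.congr' ?_ tendsto_const_nhds
    exact h2.mono fun n hn => hn.symm
  exact tendsto_nhds_unique h1 h3
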